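/- Let A, B be real n×n matrices such that for every row index i one has |a_ii| > Σ_j |b_ij| + Σ_{j≠i} |a_ij| (the sum of the absolute values of all entries of the i-th row of B plus the off-diagonal absolute row sum of A). Then for every vector b ∈ ℝ^n, the generalized absolute value equation A x − B |x| = b has exactly one solution x ∈ ℝ^n. -/

import Mathlib

/-- If for every row `i`, `|A i i| > Σ_j |B i j| + Σ_{j≠i} |A i j|`,
then for every `b` the GAVE `A x − B |x| = b` has exactly one solution. -/
theorem gave_unique_of_diag_dominance {n : ℕ} (A B : Matrix (Fin n) (Fin n) ℝ)
    (h : ∀ i : Fin n,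
      (∑ j, |B i j|) + ∑ j ∈ Finset.univ.erase i, |A i j| < |A i i|) :
    ∀ b : Fin n → ℝ,
      ∃! x : Fin n → ℝ, A.mulVec x - B.mulVec (fun i => |x i|) = b := by
  intro b
  rcases Nat.eq_zero_or_pos n with hn | hn
  · subst hn
    exact ⟨fun i => i.elim0, funext fun i => i.elim0, fun y _ => funext fun i => i.elim0⟩
  have hne : NeZero n := ⟨hn.ne'⟩
  have hApos : ∀ i, 0 < |A i i| := fun i => lt_of_le_of_lt (by positivity) (h i)
  have hAne : ∀ i, A i i ≠ 0 := fun i => fun h0 => by simpa [h0] using hApos i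
  set c : Fin n → ℝ := fun i =>
    ((∑ j, |B i j|) + ∑ j ∈ Finset.univ.erase i, |A i j|) / |A i i| with hc
  have hci : ∀ i, c i < 1 := fun i => (div_lt_one (hApos i)).2 (h i)
  have hc0 : ∀ i, 0 ≤ c i := fun i => div_nonneg (by positivity) (abs_nonneg _)
  set Kr : ℝ := Finset.univ.sup' Finset.univ_nonempty c with hKdef
  have hKc : ∀ i, c i ≤ Kr := fun i => Finset.le_sup' c (Finset.mem_univ i)
  have hK1 : Kr < 1 := (Finset.sup'_lt_iff _).2 fun i _ => hci i
  have hK0 : 0 ≤ Kr := le_trans (hc0 ⟨0, hn⟩) (hKc _)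
  set K : NNReal := Real.toNNReal Kr with hKN
  have hKcoe : (K : ℝ) = Kr := Real.coe_toNNReal _ hK0
  set T : (Fin n → ℝ) → (Fin n → ℝ) := fun x i =>
    (b i + (B.mulVec fun j => |x j|) i - ∑ j ∈ Finset.univ.erase i, A i j * x j) / A i i
      with hT
  have hfix : ∀ x, Function.IsFixedPt T x ↔
      A.mulVec x - B.mulVec (fun i => |x i|) = b := by
    intro x
    constructor
    · intro hx
      funext i
      have hxi := congrFun hx i
      simp only [hT] at hxi
      rw [div_eq_iff (hAne i)] at hxi
      simp only [Matrix.mulVec, dotProduct] at hxi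
      simp only [Pi.sub_apply, Matrix.mulVec, dotProduct]
      rw [← Finset.add_sum_erase _ (fun j => A i j * x j) (Finset.mem_univ i)]
      linarith
    · intro hx
      funext i
      have hxi := congrFun hx i
      simp only [Pi.sub_apply, Matrix.mulVec, dotProduct] at hxi
      rw [← Finset.add_sum_erase _ (fun j => A i j * x j) (Finset.mem_univ i)] at hxi
      simp only [hT]
      rw [div_eq_iff (hAne i)]
      simp only [Matrix.mulVec, dotProduct] at *
      linarith
  have hlip : LipschitzWith K T := by
    apply LipschitzWith.of_dist_le_mul
    intro x y
    rw [dist_pi_le_iff (by positivity)]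
    intro i
    have hD : ∀ j, |x j - y j| ≤ dist x y := fun j => by
      have := dist_le_pi_dist x y j
      rwa [Real.dist_eq] at this
    have hD0 : 0 ≤ dist x y := dist_nonneg
    rw [Real.dist_eq]
    have hdiff : T x i - T y i =
        ((∑ j, B i j * (|x j| - |y j|)) -
          ∑ j ∈ Finset.univ.erase i, A i j * (x j - y j)) / A i i := by
      simp only [hT, Matrix.mulVec, dotProduct, div_sub_div_same]
      congr 1
      simp only [mul_sub, Finset.sum_sub_distrib]
      ring
    rw [hdiff, abs_div]
    have h1 : |∑ j, B i j * (|x j| - |y j|)| ≤ (∑ j, |B i j|) * dist x y := by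
      calc |∑ j, B i j * (|x j| - |y j|)| ≤ ∑ j, |B i j * (|x j| - |y j|)| :=
            Finset.abs_sum_le_sum_abs _ _
        _ ≤ ∑ j, |B i j| * dist x y := by
            apply Finset.sum_le_sum
            intro j _
            rw [abs_mul]
            exact mul_le_mul_of_nonneg_left
              (le_trans (abs_abs_sub_abs_le_abs_sub _ _) (hD j)) (abs_nonneg _)
        _ = (∑ j, |B i j|) * dist x y := by rw [Finset.sum_mul]
    have h2 : |∑ j ∈ Finset.univ.erase i, A i j * (x j - y j)| ≤
        (∑ j ∈ Finset.univ.erase i, |A i j|) * dist x y := by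
      calc |∑ j ∈ Finset.univ.erase i, A i j * (x j - y j)|
          ≤ ∑ j ∈ Finset.univ.erase i, |A i j * (x j - y j)| :=
            Finset.abs_sum_le_sum_abs _ _
        _ ≤ ∑ j ∈ Finset.univ.erase i, |A i j| * dist x y := by
            apply Finset.sum_le_sum
            intro j _
            rw [abs_mul]
            exact mul_le_mul_of_nonneg_left (hD j) (abs_nonneg _)
        _ = _ := by rw [Finset.sum_mul]
    have h3 : |(∑ j, B i j * (|x j| - |y j|)) -
        ∑ j ∈ Finset.univ.erase i, A i j * (x j - y j)| ≤
        ((∑ j, |B i j|) + ∑ j ∈ Finset.univ.erase i, |A i j|) * dist x y := by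
      calc _ ≤ |∑ j, B i j * (|x j| - |y j|)| +
            |∑ j ∈ Finset.univ.erase i, A i j * (x j - y j)| := abs_sub _ _
        _ ≤ _ := by rw [add_mul]; exact add_le_add h1 h2
    rw [hKcoe]
    calc |(∑ j, B i j * (|x j| - |y j|)) -
          ∑ j ∈ Finset.univ.erase i, A i j * (x j - y j)| / |A i i|
        ≤ (((∑ j, |B i j|) + ∑ j ∈ Finset.univ.erase i, |A i j|) * dist x y) / |A i i| :=
          div_le_div_of_nonneg_right h3 (hApos i).le |>.trans_eq rfl
      _ = c i * dist x y := by rw [hc]; ring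
      _ ≤ Kr * dist x y := mul_le_mul_of_nonneg_right (hKc i) hD0
  have hK1' : K < 1 := by
    rw [← NNReal.coe_lt_coe, hKcoe, NNReal.coe_one]
    exact hK1
  have hC : ContractingWith K T := ⟨hK1', hlip⟩
  refine ⟨ContractingWith.fixedPoint T hC, (hfix _).1 hC.fixedPoint_isFixedPt, ?_⟩
  intro y hy
  exact hC.fixedPoint_unique ((hfix y).2 hy)
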